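/- arXiv:2311.06277 — 2 statements merged into one kernel-verified Lean document; each statement's English description precedes it below -/
import Mathlib

section
/- Let ω ∈ 𝓑'₀ have power series expansion ω(z) = c₁z + c₂z² + c₃z³ + ⋯ on 𝔻, let μ ∈ ℂ, and suppose 0 ≤ |c₁| ≤ 1/(1 + (3/4)|μ|). Then |c₃ − μc₁c₂| ≤ (1/48)·(1 + |c₁|)·(9|μ|²|c₁|² − 16|c₁| + 16). -/
open Complex Metric Set

private lemma normSq_mobius (a w : ℂ) :
    Complex.normSq (1 - (starRingEnd ℂ) a * w) - Complex.normSq (w - a)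
      = (1 - Complex.normSq a) * (1 - Complex.normSq w) := by
  simp only [Complex.normSq_apply, Complex.sub_re, Complex.sub_im, Complex.mul_re, Complex.mul_im,
    Complex.one_re, Complex.one_im, Complex.conj_re, Complex.conj_im]
  ring

private lemma schur_step {f : ℂ → ℂ} (hd : DifferentiableOn ℂ f (ball 0 1))
    (hb : ∀ z ∈ ball (0:ℂ) 1, ‖f z‖ ≤ 1) (ha : ‖f 0‖ < 1) :
    ∃ g : ℂ → ℂ, DifferentiableOn ℂ g (ball 0 1)
      ∧ (∀ z ∈ ball (0:ℂ) 1, ‖g z‖ ≤ 1)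
      ∧ deriv f 0 = (1 - (starRingEnd ℂ) (f 0) * f 0) * g 0
      ∧ deriv (deriv f) 0
          = (1 - (starRingEnd ℂ) (f 0) * f 0)
            * (2 * deriv g 0 - 2 * (starRingEnd ℂ) (f 0) * g 0 ^ 2) := by
  set a : ℂ := f 0 with ha_def
  set b : ℂ := (starRingEnd ℂ) a with hb_def
  have hab : ‖b‖ = ‖a‖ := Complex.norm_conj a
  have h0ball : (0:ℂ) ∈ ball (0:ℂ) 1 := mem_ball_self one_pos
  -- the Möbius numerator/denominator estimate
  have habs : ∀ w : ℂ, ‖w‖ ≤ 1 →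
      ‖w - a‖ ≤ ‖1 - b * w‖ := by
    intro w hw
    rw [Complex.norm_def, Complex.norm_def]
    apply Real.sqrt_le_sqrt
    have h1 : Complex.normSq a ≤ 1 := by
      rw [← Complex.sq_norm]; nlinarith [norm_nonneg a]
    have h2 : Complex.normSq w ≤ 1 := by
      rw [← Complex.sq_norm]; nlinarith [norm_nonneg w]
    nlinarith [normSq_mobius a w]
  have hden : ∀ z ∈ ball (0:ℂ) 1, (1:ℂ) - b * f z ≠ 0 := by
    intro z hz h
    have h1 : ‖b * f z‖ < 1 := by
      rw [norm_mul, hab]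
      calc ‖a‖ * ‖f z‖ ≤ ‖a‖ * 1 :=
            mul_le_mul_of_nonneg_left (hb z hz) (norm_nonneg a)
        _ < 1 := by simpa using ha
    rw [sub_eq_zero] at h
    rw [← h] at h1
    simp at h1
  set h : ℂ → ℂ := fun z => (f z - a) / (1 - b * f z) with hh_def
  have hdh : DifferentiableOn ℂ h (ball 0 1) :=
    (hd.sub (differentiableOn_const a)).div
      ((differentiableOn_const 1).sub ((differentiableOn_const b).mul hd)) hden
  have hh0 : h 0 = 0 := by simp [hh_def, ha_def]
  have hhb : ∀ z ∈ ball (0:ℂ) 1, ‖h z‖ ≤ 1 := by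
    intro z hz
    rw [hh_def]
    simp only [norm_div]
    exact div_le_one_of_le₀ (habs _ (hb z hz)) (norm_nonneg _)
  set g : ℂ → ℂ := dslope h 0 with hg_def
  have hgd : DifferentiableOn ℂ g (ball 0 1) :=
    (Complex.differentiableOn_dslope (isOpen_ball.mem_nhds h0ball)).mpr hdh
  have hgb : ∀ z ∈ ball (0:ℂ) 1, ‖g z‖ ≤ 1 := by
    intro z hz
    refine le_of_forall_pos_le_add fun ε hε => ?_
    have maps : MapsTo h (ball 0 1) (ball (h 0) (1 + ε)) := by
      intro w hw
      rw [hh0, mem_ball_zero_iff]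
      exact lt_of_le_of_lt (hhb w hw) (by linarith)
    have := Complex.norm_dslope_le_div_of_mapsTo_ball hdh (maps.mono_right ball_subset_closedBall) hz
    simpa using this
  -- h z = z * g z
  have hzg : ∀ z : ℂ, z * g z = h z := by
    intro z
    have := sub_smul_dslope h 0 z
    simpa [hh0] using this
  -- f z = (a + z * g z) / (1 + b * (z * g z))
  have hDne : ∀ z ∈ ball (0:ℂ) 1, (1:ℂ) + b * (z * g z) ≠ 0 := by
    intro z hz h'
    have h1 : ‖b * (z * g z)‖ < 1 := by
      rw [hzg, norm_mul, hab]
      calc ‖a‖ * ‖h z‖ ≤ ‖a‖ * 1 :=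
            mul_le_mul_of_nonneg_left (hhb z hz) (norm_nonneg a)
        _ < 1 := by simpa using ha
    have : b * (z * g z) = -1 := by linear_combination h'
    rw [this] at h1
    simp at h1
  have hfg : ∀ z ∈ ball (0:ℂ) 1, f z = (a + z * g z) / (1 + b * (z * g z)) := by
    intro z hz
    rw [eq_div_iff (hDne z hz), hzg]
    have hd' := hden z hz
    rw [hh_def]
    have : (f z - a) / (1 - b * f z) * (1 - b * f z) = f z - a := div_mul_cancel₀ _ hd'
    linear_combination -this
  -- analyticity of g
  have hg_an : AnalyticOnNhd ℂ g (ball 0 1) :=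
    (analyticOnNhd_iff_differentiableOn isOpen_ball).mpr hgd
  have hg'd : DifferentiableOn ℂ (deriv g) (ball 0 1) := hg_an.deriv.differentiableOn
  have hgat : ∀ z ∈ ball (0:ℂ) 1, HasDerivAt g (deriv g z) z := fun z hz =>
    ((hgd z hz).differentiableAt (isOpen_ball.mem_nhds hz)).hasDerivAt
  have hu : ∀ z ∈ ball (0:ℂ) 1, HasDerivAt (fun w => w * g w) (g z + z * deriv g z) z := by
    intro z hz
    have := (hasDerivAt_id z).mul (hgat z hz)
    rw [one_mul] at this
    exact this
  set F : ℂ → ℂ := fun z => (1 - b * a) * (g z + z * deriv g z) / (1 + b * (z * g z))^2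
    with hF_def
  have hfF : ∀ z ∈ ball (0:ℂ) 1, HasDerivAt f (F z) z := by
    intro z hz
    have hN : HasDerivAt (fun w => a + w * g w) (g z + z * deriv g z) z := (hu z hz).const_add a
    have hD : HasDerivAt (fun w => 1 + b * (w * g w)) (b * (g z + z * deriv g z)) z :=
      ((hu z hz).const_mul b).const_add 1
    have hQ := hN.div hD (hDne z hz)
    have heq : f =ᶠ[nhds z] fun w => (a + w * g w) / (1 + b * (w * g w)) :=
      Filter.eventuallyEq_of_mem (isOpen_ball.mem_nhds hz) (fun w hw => hfg w hw)
    have hQ' : HasDerivAt f (((g z + z * deriv g z) * (1 + b * (z * g z)) -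
        (a + z * g z) * (b * (g z + z * deriv g z))) / ((1 + b * (z * g z)) ^ 2)) z :=
      hQ.congr_of_eventuallyEq heq
    convert hQ' using 1
    rw [hF_def]
    have hne := hDne z hz
    field_simp
    ring
  have hderiv_f : ∀ z ∈ ball (0:ℂ) 1, deriv f z = F z := fun z hz => (hfF z hz).deriv
  have k1 : deriv f 0 = (1 - b * a) * g 0 := by
    rw [hderiv_f 0 h0ball, hF_def]; simp
  have hdf_ev : deriv f =ᶠ[nhds 0] F :=
    Filter.eventuallyEq_of_mem (isOpen_ball.mem_nhds h0ball) hderiv_f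
  have hg'at0 : HasDerivAt (deriv g) (deriv (deriv g) 0) 0 :=
    ((hg'd 0 h0ball).differentiableAt (isOpen_ball.mem_nhds h0ball)).hasDerivAt
  have hN0 : HasDerivAt (fun w => (1 - b * a) * (g w + w * deriv g w))
      ((1 - b * a) * (deriv g 0 + (1 * deriv g 0 + 0 * deriv (deriv g) 0))) 0 :=
    ((hgat 0 h0ball).add ((hasDerivAt_id 0).mul hg'at0)).const_mul _
  have hD0 : HasDerivAt (fun w => 1 + b * (w * g w)) (b * (g 0 + 0 * deriv g 0)) 0 :=
    ((hu 0 h0ball).const_mul b).const_add 1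
  have hDsq : HasDerivAt (fun w => (1 + b * (w * g w))^2)
      ((2:ℕ) * (1 + b * ((0:ℂ) * g 0)) ^ (2-1) * (b * (g 0 + 0 * deriv g 0))) 0 := hD0.pow 2
  have hden0 : ((1:ℂ) + b * ((0:ℂ) * g 0))^2 ≠ 0 := by simp
  have hF0 : HasDerivAt F
      (((1 - b * a) * (deriv g 0 + (1 * deriv g 0 + 0 * deriv (deriv g) 0)) *
          ((1 + b * ((0:ℂ) * g 0))^2) -
        ((1 - b * a) * (g 0 + (0:ℂ) * deriv g 0)) *
          ((2:ℕ) * (1 + b * ((0:ℂ) * g 0)) ^ (2-1) * (b * (g 0 + 0 * deriv g 0)))) /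
        (((1 + b * ((0:ℂ) * g 0))^2) ^ 2)) 0 := by
    rw [hF_def]
    exact hN0.div hDsq hden0
  have k2 : deriv (deriv f) 0 = (1 - b * a) * (2 * deriv g 0 - 2 * b * g 0 ^ 2) := by
    rw [hdf_ev.deriv_eq, hF0.deriv]
    simp
    ring
  exact ⟨g, hgd, hgb, k1, k2⟩

private lemma eqOn_const_of_max {f : ℂ → ℂ} (hd : DifferentiableOn ℂ f (ball 0 1))
    (hb : ∀ z ∈ ball (0:ℂ) 1, ‖f z‖ ≤ ‖f 0‖) :
    EqOn f (fun _ => f 0) (ball 0 1) :=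
  Complex.eqOn_of_isPreconnected_of_isMaxOn_norm (convex_ball 0 1).isPreconnected isOpen_ball hd
    (mem_ball_self one_pos) (isMaxOn_iff.mpr fun z hz => hb z hz)

private lemma abs_one_sub_conj_mul_self {a : ℂ} (ha : ‖a‖ ≤ 1) :
    ‖1 - (starRingEnd ℂ) a * a‖ = 1 - ‖a‖ ^ 2 := by
  have h : (starRingEnd ℂ) a * a = ((‖a‖ ^ 2 : ℝ) : ℂ) := by
    rw [mul_comm, Complex.mul_conj, Complex.sq_norm]
  rw [h, ← Complex.ofReal_one, ← Complex.ofReal_sub, Complex.norm_real, Real.norm_eq_abs]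
  exact abs_of_nonneg (by nlinarith [norm_nonneg a])

private lemma schur_A {f : ℂ → ℂ} (hd : DifferentiableOn ℂ f (ball 0 1))
    (hb : ∀ z ∈ ball (0:ℂ) 1, ‖f z‖ ≤ 1) :
    ‖deriv f 0‖ ≤ 1 - ‖f 0‖ ^ 2 := by
  have h0ball : (0:ℂ) ∈ ball (0:ℂ) 1 := mem_ball_self one_pos
  rcases lt_or_ge (‖f 0‖) 1 with ha | ha
  · obtain ⟨g, hgd, hgb, h1, _⟩ := schur_step hd hb ha
    rw [h1, norm_mul, abs_one_sub_conj_mul_self ha.le]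
    calc (1 - ‖f 0‖ ^ 2) * ‖g 0‖
        ≤ (1 - ‖f 0‖ ^ 2) * 1 :=
          mul_le_mul_of_nonneg_left (hgb 0 h0ball)
            (by nlinarith [norm_nonneg (f 0)])
      _ = 1 - ‖f 0‖ ^ 2 := mul_one _
  · have h1 : ‖f 0‖ = 1 := le_antisymm (hb 0 h0ball) ha
    have hcst := eqOn_const_of_max hd (fun z hz => by rw [h1]; exact hb z hz)
    have : f =ᶠ[nhds 0] fun _ => f 0 :=
      Filter.eventuallyEq_of_mem (isOpen_ball.mem_nhds h0ball) hcst
    rw [this.deriv_eq, deriv_const]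
    simp [h1]

private lemma coeff_eq {ω : ℂ → ℂ} {c : ℕ → ℂ}
    (hc : ∀ z ∈ ball (0:ℂ) 1, HasSum (fun n : ℕ => c (n + 1) * z ^ (n + 1)) (ω z)) :
    ∀ n : ℕ, 1 ≤ n → (n.factorial : ℂ) * c n = iteratedDeriv n ω 0 := by
  classical
  set q : ℕ → ℂ := fun n => if n = 0 then 0 else c n with hq_def
  set p : FormalMultilinearSeries ℂ ℂ ℂ := FormalMultilinearSeries.ofScalars ℂ q with hp_def
  have hsum : ∀ z ∈ ball (0:ℂ) 1, HasSum (fun n => q n * z ^ n) (ω z) := by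
    intro z hz
    have h2 : HasSum (fun n => q (n + 1) * z ^ (n + 1))
        (ω z - ∑ i ∈ Finset.range 1, q i * z ^ i) := by
      simpa [hq_def] using hc z hz
    exact (hasSum_nat_add_iff' 1).mp h2
  have hradius : 1 ≤ p.radius := by
    apply ENNReal.le_of_forall_nnreal_lt
    intro r hr
    have hr1 : (r : ℝ) < 1 := by exact_mod_cast hr
    have hz : ((r : ℝ) : ℂ) ∈ ball (0:ℂ) 1 := by
      rw [mem_ball_zero_iff, Complex.norm_real, Real.norm_eq_abs,
        _root_.abs_of_nonneg r.coe_nonneg]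
      exact hr1
    have hten : Filter.Tendsto (fun n => ‖q n * ((r:ℝ):ℂ) ^ n‖) Filter.atTop (nhds 0) := by
      have := (hsum _ hz).summable.tendsto_atTop_zero
      simpa using this.norm
    obtain ⟨C, hC⟩ := hten.bddAbove_range
    apply p.le_radius_of_bound C
    intro n
    have h1 : ‖p n‖ = ‖q n‖ := FormalMultilinearSeries.ofScalars_norm ℂ q n
    rw [h1]
    have h2 : ‖q n‖ * (r:ℝ) ^ n = ‖q n * ((r:ℝ):ℂ) ^ n‖ := by
      rw [norm_mul, norm_pow, Complex.norm_real, Real.norm_eq_abs,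
        _root_.abs_of_nonneg r.coe_nonneg]
    rw [h2]
    exact hC ⟨n, rfl⟩
  have hco : ∀ m, (FormalMultilinearSeries.ofScalars ℂ q).coeff m = q m := by
    intro m
    show (FormalMultilinearSeries.ofScalars ℂ q) m (fun _ => (1:ℂ)) = q m
    rw [FormalMultilinearSeries.ofScalars_apply_eq]
    simp
  have hps : HasFPowerSeriesOnBall ω p 0 1 := by
    refine ⟨hradius, zero_lt_one, fun {y} hy => ?_⟩
    have hy' : y ∈ ball (0:ℂ) 1 := by
      rw [EMetric.mem_ball, edist_dist] at hy
      rw [mem_ball]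
      exact ENNReal.ofReal_lt_one.mp hy
    have := hsum y hy'
    simpa [hp_def, hco, mul_comm] using this
  intro n hn
  have h := hps.factorial_smul (y := (1:ℂ)) n
  have hL : (n.factorial : ℂ) * q n = iteratedDeriv n ω 0 := by
    rw [iteratedDeriv_eq_iteratedFDeriv, ← h]
    simp [hp_def, hco, FormalMultilinearSeries.ofScalars_apply_eq, smul_eq_mul]
  rw [← hL, hq_def]
  simp only []
  rw [if_neg (by omega)]

theorem stmt_9 (ω : ℂ → ℂ) (c : ℕ → ℂ) (μ : ℂ)
    (hd : DifferentiableOn ℂ ω (ball 0 1))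
    (h0 : ω 0 = 0)
    (hb : ∀ z ∈ ball (0:ℂ) 1, ‖deriv ω z‖ ≤ 1)
    (hc : ∀ z ∈ ball (0:ℂ) 1, HasSum (fun n : ℕ => c (n + 1) * z ^ (n + 1)) (ω z))
    (h1 : ‖c 1‖ ≤ 1 / (1 + (3/4) * ‖μ‖)) :
    ‖c 3 - μ * c 1 * c 2‖ ≤ (1/48) * (1 + ‖c 1‖) * (9 * ‖μ‖^2 * ‖c 1‖^2 - 16 * ‖c 1‖ + 16) := by
  have hcoe := coeff_eq hc
  have h0ball : (0:ℂ) ∈ ball (0:ℂ) 1 := mem_ball_self one_pos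
  have hω_an : AnalyticOnNhd ℂ ω (ball 0 1) :=
    (analyticOnNhd_iff_differentiableOn isOpen_ball).mpr hd
  have hfd : DifferentiableOn ℂ (deriv ω) (ball 0 1) := hω_an.deriv.differentiableOn
  have e1 : c 1 = deriv ω 0 := by
    have := hcoe 1 le_rfl
    simpa [iteratedDeriv_one, Nat.factorial] using this
  have it2 : iteratedDeriv 2 ω = deriv (deriv ω) := by
    rw [show (2:ℕ) = 1 + 1 from rfl, iteratedDeriv_succ, iteratedDeriv_one]
  have it3 : iteratedDeriv 3 ω = deriv (deriv (deriv ω)) := by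
    rw [show (3:ℕ) = 2 + 1 from rfl, iteratedDeriv_succ, it2]
  have e2 : (2:ℂ) * c 2 = deriv (deriv ω) 0 := by
    have := hcoe 2 (by norm_num)
    rw [it2] at this
    norm_num at this
    exact this
  have e3 : (6:ℂ) * c 3 = deriv (deriv (deriv ω)) 0 := by
    have := hcoe 3 (by norm_num)
    rw [it3] at this
    norm_num [Nat.factorial] at this
    exact this
  rcases lt_or_ge (‖deriv ω 0‖) 1 with hA | hA
  · obtain ⟨g, hgd, hgb, k1, k2⟩ := schur_step hfd hb hA
    have hAg := schur_A hgd hgb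
    have ht1 : ‖g 0‖ ≤ 1 := hgb 0 h0ball
    have hc2 : c 2 = (1 - (starRingEnd ℂ) (deriv ω 0) * deriv ω 0) * g 0 / 2 := by
      rw [k1] at e2; linear_combination e2 / 2
    have hc3 : c 3 = (1 - (starRingEnd ℂ) (deriv ω 0) * deriv ω 0)
        * (2 * deriv g 0 - 2 * (starRingEnd ℂ) (deriv ω 0) * g 0 ^ 2) / 6 := by
      rw [k2] at e3; linear_combination e3 / 6
    have expand : c 3 - μ * c 1 * c 2
        = (1 - (starRingEnd ℂ) (deriv ω 0) * deriv ω 0)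
          * (deriv g 0 / 3 - (starRingEnd ℂ) (deriv ω 0) * g 0 ^ 2 / 3
              - μ * deriv ω 0 * g 0 / 2) := by
      rw [hc2, hc3, e1]; ring
    rw [expand, norm_mul, abs_one_sub_conj_mul_self hA.le, e1]
    set A := ‖deriv ω 0‖ with hA_def
    set t := ‖g 0‖ with ht_def
    set M := ‖μ‖ with hM_def
    set G := ‖deriv g 0‖ with hG_def
    have t1 : ‖μ * deriv ω 0 * g 0 / 2‖ = M * A * t / 2 := by
      simp [map_div₀, map_mul, hM_def, hA_def, ht_def]
    have t2 : ‖(starRingEnd ℂ) (deriv ω 0) * g 0 ^ 2 / 3‖ = A * t ^ 2 / 3 := by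
      simp [map_div₀, map_mul, map_pow, Complex.norm_conj, hA_def, ht_def]
    have t3 : ‖deriv g 0 / 3‖ = G / 3 := by
      simp [map_div₀, hG_def]
    have tri : ‖deriv g 0 / 3 - (starRingEnd ℂ) (deriv ω 0) * g 0 ^ 2 / 3
          - μ * deriv ω 0 * g 0 / 2‖ ≤ G / 3 + A * t ^ 2 / 3 + M * A * t / 2 := by
      calc ‖deriv g 0 / 3 - (starRingEnd ℂ) (deriv ω 0) * g 0 ^ 2 / 3
              - μ * deriv ω 0 * g 0 / 2‖
          ≤ ‖deriv g 0 / 3 - (starRingEnd ℂ) (deriv ω 0) * g 0 ^ 2 / 3‖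
              + ‖μ * deriv ω 0 * g 0 / 2‖ := norm_sub_le _ _
        _ ≤ (‖deriv g 0 / 3‖
              + ‖(starRingEnd ℂ) (deriv ω 0) * g 0 ^ 2 / 3‖)
              + ‖μ * deriv ω 0 * g 0 / 2‖ :=
            add_le_add (norm_sub_le _ _) le_rfl
        _ = G / 3 + A * t ^ 2 / 3 + M * A * t / 2 := by rw [t1, t2, t3]
    have hA0 : 0 ≤ A := norm_nonneg _
    have ht0 : 0 ≤ t := norm_nonneg _
    have hM0 : 0 ≤ M := norm_nonneg _
    have hA1 : A ≤ 1 := hA.le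
    have h1A2 : 0 ≤ 1 - A ^ 2 := by nlinarith
    calc (1 - A ^ 2) * ‖deriv g 0 / 3
            - (starRingEnd ℂ) (deriv ω 0) * g 0 ^ 2 / 3 - μ * deriv ω 0 * g 0 / 2‖
        ≤ (1 - A ^ 2) * (G / 3 + A * t ^ 2 / 3 + M * A * t / 2) :=
          mul_le_mul_of_nonneg_left tri h1A2
      _ ≤ 1/48 * (1 + A) * (9 * M ^ 2 * A ^ 2 - 16 * A + 16) := by
          nlinarith [mul_nonneg h1A2 (show (0:ℝ) ≤ 1 - t ^ 2 - G by nlinarith),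
            mul_nonneg (show (0:ℝ) ≤ 1 + A by linarith)
              (sq_nonneg (3 * M * A - 4 * t * (1 - A)))]
  · have hone : ‖deriv ω 0‖ = 1 := le_antisymm (hb 0 h0ball) hA
    have hcst := eqOn_const_of_max hfd (fun z hz => by rw [hone]; exact hb z hz)
    have hdz : ∀ z ∈ ball (0:ℂ) 1, deriv (deriv ω) z = 0 := by
      intro z hz
      have : deriv ω =ᶠ[nhds z] fun _ => deriv ω 0 :=
        Filter.eventuallyEq_of_mem (isOpen_ball.mem_nhds hz) hcst
      rw [this.deriv_eq, deriv_const]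
    have hc2 : c 2 = 0 := by
      have h := hdz 0 h0ball
      rw [← e2] at h
      simpa using h
    have hdd : deriv (deriv (deriv ω)) 0 = 0 := by
      have : deriv (deriv ω) =ᶠ[nhds 0] fun _ => 0 :=
        Filter.eventuallyEq_of_mem (isOpen_ball.mem_nhds h0ball) hdz
      rw [this.deriv_eq, deriv_const]
    have hc3 : c 3 = 0 := by
      rw [hdd] at e3
      simpa using e3
    rw [hc2, hc3, e1, hone]
    have hz : ‖0 - μ * deriv ω 0 * 0‖ = 0 := by simp
    rw [hz]
    nlinarith [sq_nonneg (‖μ‖)]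
end

section
/- Let ω ∈ 𝓑'₀ have power series expansion ω(z) = c₁z + c₂z² + c₃z³ + ⋯ on 𝔻. If 0 ≤ |c₁| ≤ 2/5 then |c₃ − 2c₁c₂| ≤ (1/12)·(1 + |c₁|)·(9|c₁|² − 4|c₁| + 4), and if 2/5 ≤ |c₁| ≤ 1 then |c₃ − 2c₁c₂| ≤ (4/3)·|c₁|·(1 − |c₁|²). -/
open Complex Metric Filter

private lemma mob_id (a w : ℂ) :
    ‖1 - (starRingEnd ℂ) a * w‖^2 - ‖w - a‖^2 = (1 - ‖a‖^2) * (1 - ‖w‖^2) := by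
  simp only [Complex.sq_norm]
  simp only [Complex.normSq_apply, Complex.sub_re, Complex.sub_im, Complex.mul_re, Complex.mul_im,
    Complex.conj_re, Complex.conj_im, Complex.one_re, Complex.one_im]
  ring

private lemma den_ne (a w : ℂ) (ha : ‖a‖ < 1) (hw : ‖w‖ ≤ 1) :
    1 - (starRingEnd ℂ) a * w ≠ 0 := by
  intro h
  rw [sub_eq_zero] at h
  have : ‖(starRingEnd ℂ) a * w‖ < 1 := by
    rw [norm_mul, RCLike.norm_conj]
    calc ‖a‖ * ‖w‖ ≤ ‖a‖ * 1 := by gcongr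
    _ < 1 := by simpa using ha
  rw [← h] at this; simp at this

private lemma mob_lt (a w : ℂ) (ha : ‖a‖ < 1) (hw : ‖w‖ < 1) :
    ‖(w - a) / (1 - (starRingEnd ℂ) a * w)‖ < 1 := by
  have hne := den_ne a w ha hw.le
  have hpos : 0 < ‖1 - (starRingEnd ℂ) a * w‖ := norm_pos_iff.mpr hne
  rw [norm_div, div_lt_one hpos]
  have h := mob_id a w
  nlinarith [norm_nonneg (w - a), hpos, norm_nonneg a, norm_nonneg w,
    mul_pos (by nlinarith [norm_nonneg a] : (0:ℝ) < 1 - ‖a‖^2)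
      (by nlinarith [norm_nonneg w] : (0:ℝ) < 1 - ‖w‖^2)]
private lemma max_case (f : ℂ → ℂ) (hd : DifferentiableOn ℂ f (ball 0 1))
    (hb : ∀ z ∈ ball (0:ℂ) 1, ‖f z‖ ≤ 1) (hex : ¬ ∀ z ∈ ball (0:ℂ) 1, ‖f z‖ < 1) :
    (∀ z ∈ ball (0:ℂ) 1, deriv f z = 0) ∧ ‖f 0‖ = 1 := by
  push_neg at hex
  obtain ⟨z₀, hz₀, h1⟩ := hex
  have heq : ‖f z₀‖ = 1 := le_antisymm (hb _ hz₀) h1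
  have hmax : IsMaxOn (norm ∘ f) (ball (0:ℂ) 1) z₀ := fun z hz => by
    simp only [Function.comp_apply, heq]; exact hb z hz
  have hEq : Set.EqOn f (Function.const ℂ (f z₀)) (ball (0:ℂ) 1) :=
    Complex.eqOn_of_isPreconnected_of_isMaxOn_norm (convex_ball (0:ℂ) 1).isPreconnected
      isOpen_ball hd hz₀ hmax
  constructor
  · intro z hz
    have : f =ᶠ[nhds z] Function.const ℂ (f z₀) :=
      hEq.eventuallyEq_of_mem (isOpen_ball.mem_nhds hz)
    rw [this.deriv_eq]; exact deriv_const z _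
  · rw [hEq (mem_ball_self one_pos), Function.const_apply, heq]

private lemma SP_strict (f : ℂ → ℂ) (hd : DifferentiableOn ℂ f (ball 0 1))
    (hb : ∀ z ∈ ball (0:ℂ) 1, ‖f z‖ < 1) : ‖deriv f 0‖ ≤ 1 - ‖f 0‖^2 := by
  have h0 : (0:ℂ) ∈ ball (0:ℂ) 1 := mem_ball_self one_pos
  set a := f 0 with ha_def
  have ha : ‖a‖ < 1 := hb 0 h0
  set A := (starRingEnd ℂ) a with hA_def
  set h := fun z => (f z - a) / (1 - A * f z) with hh_def
  have hden : ∀ z ∈ ball (0:ℂ) 1, 1 - A * f z ≠ 0 := fun z hz => den_ne a (f z) ha (hb z hz).le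
  have hdh : DifferentiableOn ℂ h (ball 0 1) :=
    (hd.sub_const a).div ((differentiableOn_const 1).sub (hd.const_mul A)) hden
  have hh0 : h 0 = 0 := by simp [hh_def]; exact Or.inl (sub_eq_zero.mpr rfl)
  have hmaps : Set.MapsTo h (ball (0:ℂ) 1) (ball (h 0) 1) := by
    intro z hz
    rw [hh0, mem_ball, dist_eq_norm, sub_zero]
    exact mob_lt a (f z) ha (hb z hz)
  have hb0 : ‖deriv h 0‖ ≤ 1 := by
    have := Complex.norm_dslope_le_div_of_mapsTo_ball hdh (hmaps.mono_right ball_subset_closedBall) h0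
    rwa [dslope_same, div_one] at this
  -- compute deriv h 0
  have hf0 : HasDerivAt f (deriv f 0) 0 :=
    (hd.differentiableAt (isOpen_ball.mem_nhds h0)).hasDerivAt
  have num : HasDerivAt (fun z => f z - a) (deriv f 0) 0 := hf0.sub_const a
  have den : HasDerivAt (fun z => 1 - A * f z) (-(A * deriv f 0)) 0 :=
    (hf0.const_mul A).const_sub 1
  have hdiv : HasDerivAt h
      ((deriv f 0 * (1 - A * f 0) - (f 0 - a) * (-(A * deriv f 0))) / (1 - A * f 0)^2) 0 :=
    num.div den (hden 0 h0)
  have hne : (1 - A * a) ≠ 0 := by have := hden 0 h0; rwa [← ha_def] at this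
  have hval : deriv h 0 = deriv f 0 / (1 - A * a) := by
    rw [hdiv.deriv, ← ha_def, sub_self, zero_mul, sub_zero]
    field_simp
  have hAa : A * a = ((‖a‖^2 : ℝ) : ℂ) := by
    rw [hA_def, mul_comm, Complex.mul_conj, Complex.normSq_eq_norm_sq]
  have hpos : (0:ℝ) < 1 - ‖a‖^2 := by nlinarith [norm_nonneg a]
  have hnorm : ‖(1 - A * a : ℂ)‖ = 1 - ‖a‖^2 := by
    rw [hAa]
    rw [show (1 : ℂ) - ((‖a‖^2 : ℝ) : ℂ) = (((1 - ‖a‖^2 : ℝ)) : ℂ) by push_cast; ring]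
    rw [Complex.norm_real, Real.norm_eq_abs, abs_of_pos hpos]
  rw [hval, norm_div, hnorm, div_le_one hpos] at hb0
  exact hb0

private lemma SP (f : ℂ → ℂ) (hd : DifferentiableOn ℂ f (ball 0 1))
    (hb : ∀ z ∈ ball (0:ℂ) 1, ‖f z‖ ≤ 1) : ‖deriv f 0‖ ≤ 1 - ‖f 0‖^2 := by
  by_cases hs : ∀ z ∈ ball (0:ℂ) 1, ‖f z‖ < 1
  · exact SP_strict f hd hs
  · obtain ⟨hder, hn⟩ := max_case f hd hb hs
    rw [hder 0 (mem_ball_self one_pos), hn]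
    simp

private lemma schur2 (f : ℂ → ℂ) (hd : DifferentiableOn ℂ f (ball 0 1))
    (hb : ∀ z ∈ ball (0:ℂ) 1, ‖f z‖ ≤ 1) :
    ∃ b0 b1 : ℂ, ‖b0‖ ≤ 1 ∧ ‖b1‖ ≤ 1 - ‖b0‖^2 ∧
      deriv f 0 = (1 - (starRingEnd ℂ) (f 0) * f 0) * b0 ∧
      deriv (deriv f) 0
        = 2 * (1 - (starRingEnd ℂ) (f 0) * f 0) * (b1 - (starRingEnd ℂ) (f 0) * b0^2) := by
  have h0 : (0:ℂ) ∈ ball (0:ℂ) 1 := mem_ball_self one_pos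
  by_cases hs : ∀ z ∈ ball (0:ℂ) 1, ‖f z‖ < 1
  case neg =>
    obtain ⟨hder, hn⟩ := max_case f hd hb hs
    refine ⟨0, 0, by simp, by simp, by simp [hder 0 h0], ?_⟩
    have heq : Set.EqOn (deriv f) (fun _ => (0:ℂ)) (ball 0 1) := fun z hz => hder z hz
    have h2 : deriv f =ᶠ[nhds 0] fun _ => (0:ℂ) :=
      heq.eventuallyEq_of_mem (isOpen_ball.mem_nhds h0)
    rw [h2.deriv_eq]
    simp
  case pos =>
  set a := f 0 with ha_def
  have ha : ‖a‖ < 1 := hs 0 h0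
  set A := (starRingEnd ℂ) a with hA_def
  set h := fun z => (f z - a) / (1 - A * f z) with hh_def
  have hden : ∀ z ∈ ball (0:ℂ) 1, 1 - A * f z ≠ 0 := fun z hz => den_ne a (f z) ha (hs z hz).le
  have hdh : DifferentiableOn ℂ h (ball 0 1) :=
    (hd.sub_const a).div ((differentiableOn_const 1).sub (hd.const_mul A)) hden
  have hh0 : h 0 = 0 := by simp [hh_def]; exact Or.inl (sub_eq_zero.mpr rfl)
  have hmaps : Set.MapsTo h (ball (0:ℂ) 1) (ball (h 0) 1) := by
    intro z hz
    rw [hh0, mem_ball, dist_eq_norm, sub_zero]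
    exact mob_lt a (f z) ha (hs z hz)
  have hh_an : AnalyticOnNhd ℂ h (ball 0 1) := hdh.analyticOnNhd isOpen_ball
  obtain ⟨p, hp⟩ := hh_an 0 h0
  set g := dslope h 0 with hg_def
  have hg : HasFPowerSeriesAt g p.fslope 0 := hp.has_fpower_series_dslope_fslope
  have hgd : DifferentiableOn ℂ g (ball 0 1) := by
    intro z hz
    rcases eq_or_ne z 0 with rfl | hz0
    · have hga : AnalyticAt ℂ g 0 := ⟨p.fslope, hg⟩
      exact hga.differentiableAt.differentiableWithinAt
    · exact (differentiableWithinAt_dslope_of_ne hz0).2 (hdh z hz)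
  have hgb : ∀ z ∈ ball (0:ℂ) 1, ‖g z‖ ≤ 1 := by
    intro z hz
    have := Complex.norm_dslope_le_div_of_mapsTo_ball hdh (hmaps.mono_right ball_subset_closedBall) hz
    rwa [div_one] at this
  have hSPg : ‖deriv g 0‖ ≤ 1 - ‖g 0‖^2 := SP g hgd hgb
  have hb0le : ‖g 0‖ ≤ 1 := hgb 0 h0
  -- coefficient identities
  have hg0 : g 0 = deriv h 0 := dslope_same h 0
  have hcoeff1 : deriv h 0 = p.coeff 1 := by
    rw [hp.deriv, FormalMultilinearSeries.apply_eq_pow_smul_coeff]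
    simp
  have hcoeff2 : deriv g 0 = p.coeff 2 := by
    rw [hg.deriv, FormalMultilinearSeries.apply_eq_pow_smul_coeff,
      FormalMultilinearSeries.coeff_fslope]
    simp
  have hD2h : deriv (deriv h) 0 = 2 * p.coeff 2 := by
    obtain ⟨r, hpr⟩ := hp
    have hfact := hpr.factorial_smul (1:ℂ) 2
    rw [FormalMultilinearSeries.apply_eq_pow_smul_coeff] at hfact
    have : iteratedFDeriv ℂ 2 h 0 (fun _ => (1:ℂ)) = iteratedDeriv 2 h 0 :=
      (iteratedDeriv_eq_iteratedFDeriv).symm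
    rw [this, iteratedDeriv_succ, iteratedDeriv_one] at hfact
    rw [← hfact]
    simp [Nat.factorial]
  -- derivative identities
  have E2 : ∀ z ∈ ball (0:ℂ) 1,
      deriv h z * (1 - A * f z) - A * (h z * deriv f z) = deriv f z := by
    intro z hz
    have hfz : HasDerivAt f (deriv f z) z :=
      (hd.differentiableAt (isOpen_ball.mem_nhds hz)).hasDerivAt
    have hhz : HasDerivAt h (deriv h z) z :=
      (hdh.differentiableAt (isOpen_ball.mem_nhds hz)).hasDerivAt
    have HL : HasDerivAt (fun w => h w * (1 - A * f w))
        (deriv h z * (1 - A * f z) + h z * (-(A * deriv f z))) z :=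
      hhz.mul ((hfz.const_mul A).const_sub 1)
    have heq : (fun w => f w - a) =ᶠ[nhds z] (fun w => h w * (1 - A * f w)) := by
      filter_upwards [isOpen_ball.mem_nhds hz] with w hw
      rw [hh_def]
      exact (div_mul_cancel₀ _ (hden w hw)).symm
    have HR : HasDerivAt (fun w => f w - a)
        (deriv h z * (1 - A * f z) + h z * (-(A * deriv f z))) z :=
      HL.congr_of_eventuallyEq heq
    have := HR.unique (hfz.sub_const a)
    linear_combination this
  have E1 : deriv h 0 * (1 - A * a) = deriv f 0 := by
    have := E2 0 h0
    rw [hh0, ← ha_def] at this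
    simpa using this
  -- second derivative identity
  have hdf_an : AnalyticOnNhd ℂ (deriv f) (ball 0 1) := (hd.analyticOnNhd isOpen_ball).deriv
  have hdh_an : AnalyticOnNhd ℂ (deriv h) (ball 0 1) := hh_an.deriv
  have hf0 : HasDerivAt f (deriv f 0) 0 := (hd.differentiableAt (isOpen_ball.mem_nhds h0)).hasDerivAt
  have hh0' : HasDerivAt h (deriv h 0) 0 := (hdh.differentiableAt (isOpen_ball.mem_nhds h0)).hasDerivAt
  have Ddh : HasDerivAt (deriv h) (deriv (deriv h) 0) 0 := (hdh_an 0 h0).differentiableAt.hasDerivAt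
  have Ddf : HasDerivAt (deriv f) (deriv (deriv f) 0) 0 := (hdf_an 0 h0).differentiableAt.hasDerivAt
  have HPhi : HasDerivAt (fun z => deriv h z * (1 - A * f z) - A * (h z * deriv f z))
      ((deriv (deriv h) 0 * (1 - A * f 0) + deriv h 0 * (-(A * deriv f 0)))
        - A * (deriv h 0 * deriv f 0 + h 0 * deriv (deriv f) 0)) 0 :=
    (Ddh.mul ((hf0.const_mul A).const_sub 1)).sub
      ((hh0'.mul Ddf).const_mul A)
  have heq2 : deriv f =ᶠ[nhds 0] (fun z => deriv h z * (1 - A * f z) - A * (h z * deriv f z)) := by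
    filter_upwards [isOpen_ball.mem_nhds h0] with w hw
    exact (E2 w hw).symm
  have HPhi' : HasDerivAt (deriv f)
      ((deriv (deriv h) 0 * (1 - A * f 0) + deriv h 0 * (-(A * deriv f 0)))
        - A * (deriv h 0 * deriv f 0 + h 0 * deriv (deriv f) 0)) 0 :=
    HPhi.congr_of_eventuallyEq heq2
  have E3 := HPhi'.unique Ddf
  rw [hh0, ← ha_def] at E3
  -- conclude
  refine ⟨g 0, deriv g 0, hb0le, hSPg, ?_, ?_⟩
  · rw [hg0]
    linear_combination -E1
  · rw [hg0, hcoeff2]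
    linear_combination (-1 : ℂ) * E3 + (1 - A*a) * hD2h + (2 * A * deriv h 0) * E1
private lemma coeffs (ω : ℂ → ℂ) (c : ℕ → ℂ)
    (hc : ∀ z ∈ ball (0:ℂ) 1, HasSum (fun n : ℕ => c (n + 1) * z ^ (n + 1)) (ω z)) :
    ∀ n : ℕ, 1 ≤ n → iteratedDeriv n ω 0 = (n.factorial : ℂ) * c n := by
  set c' : ℕ → ℂ := fun n => if n = 0 then 0 else c n with hc'_def
  set q := FormalMultilinearSeries.ofScalars ℂ c' with hq_def
  have happ : ∀ (n : ℕ) (z : ℂ), q n (fun _ => z) = c' n * z^n := fun n z => by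
    rw [hq_def, FormalMultilinearSeries.ofScalars_apply_eq]; simp [smul_eq_mul]
  have hu : ∀ z ∈ ball (0:ℂ) 1, HasSum (fun n => c' n * z^n) (ω z) := by
    intro z hz
    have h1 := hc z hz
    have he : (fun n : ℕ => c (n+1) * z^(n+1)) = fun n : ℕ => c' (n+1) * z^(n+1) := by
      funext n; simp [hc'_def]
    rw [he] at h1
    refine (hasSum_nat_add_iff' 1).mp ?_
    simpa [hc'_def] using h1
  have hrad : 1 ≤ q.radius := by
    refine ENNReal.le_of_forall_nnreal_lt ?_
    intro r hr
    have hrr : (r : ℝ) < 1 := by exact_mod_cast hr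
    have hz : ((r : ℝ) : ℂ) ∈ ball (0:ℂ) 1 := by
      rw [mem_ball_zero_iff]
      simpa [Complex.norm_real, _root_.abs_of_nonneg r.coe_nonneg] using hrr
    have hs := (hu _ hz).summable
    have ht0 := hs.tendsto_atTop_zero
    have hteq : (fun n => ‖q n‖ * (r:ℝ)^n) = fun n => ‖c' n * ((r:ℝ):ℂ)^n‖ := by
      funext n
      rw [norm_mul, norm_pow, Complex.norm_real, Real.norm_eq_abs,
        _root_.abs_of_nonneg r.coe_nonneg, hq_def, FormalMultilinearSeries.ofScalars_norm]
    have htt : Tendsto (fun n => ‖q n‖ * (r:ℝ)^n) atTop (nhds 0) := by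
      rw [hteq]
      simpa using ht0.norm
    exact q.le_radius_of_tendsto htt
  have hq0 : 0 < q.radius := lt_of_lt_of_le one_pos hrad
  have hqb := q.hasFPowerSeriesOnBall hq0
  have heq : q.sum =ᶠ[nhds 0] ω := by
    filter_upwards [isOpen_ball.mem_nhds (mem_ball_self (by norm_num : (0:ℝ) < 1))] with z hz
    have hz' : z ∈ EMetric.ball (0:ℂ) q.radius := by
      refine lt_of_lt_of_le ?_ hrad
      rw [edist_dist, dist_zero_right]
      exact ENNReal.ofReal_lt_one.mpr (by simpa using mem_ball_zero_iff.mp hz)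
    have hsum := q.hasSum hz'
    have hsum' : HasSum (fun n => c' n * z^n) (q.sum z) := by
      rwa [show (fun n : ℕ => q n fun _ => z) = fun n => c' n * z^n from funext fun n => happ n z]
        at hsum
    exact hsum'.unique (hu z hz)
  have hat : HasFPowerSeriesAt ω q 0 := hqb.hasFPowerSeriesAt.congr heq
  intro n hn
  obtain ⟨R, hR⟩ := hat
  have hfact := hR.factorial_smul (1:ℂ) n
  rw [happ, ← iteratedDeriv_eq_iteratedFDeriv] at hfact
  rw [← hfact]
  have : c' n = c n := by simp [hc'_def, Nat.pos_iff_ne_zero.mp hn]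
  simp [this, nsmul_eq_mul]
private lemma branch1 (t s : ℝ) (ht0 : 0 ≤ t) (ht : t ≤ 2/5) (hs0 : 0 ≤ s) (hs : s ≤ 1) (ht1 : t ≤ 1) :
    (1 - t^2)*((1 - s^2) + t*s^2)/3 + t*(1-t^2)*s ≤ (1/12)*(1+t)*(9*t^2 - 4*t + 4) := by
  nlinarith [mul_nonneg (by linarith : (0:ℝ) ≤ 1 + t) (sq_nonneg (3*t - 2*(1-t)*s))]

private lemma branch2 (t s : ℝ) (ht0 : 0 ≤ t) (ht : 2/5 ≤ t) (hs0 : 0 ≤ s) (hs : s ≤ 1) (ht1 : t ≤ 1) :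
    (1 - t^2)*((1 - s^2) + t*s^2)/3 + t*(1-t^2)*s ≤ (4/3)*t*(1-t^2) := by
  have h1 : (0:ℝ) ≤ 1 - t^2 := by nlinarith
  have h2 : (0:ℝ) ≤ 1 - s := by linarith
  have h3 : (0:ℝ) ≤ (4*t - 1) - (1-t)*s := by nlinarith
  nlinarith [mul_nonneg (mul_nonneg h1 h2) h3]

theorem stmt_11 (ω : ℂ → ℂ) (c : ℕ → ℂ)
    (hd : DifferentiableOn ℂ ω (ball 0 1))
    (h0 : ω 0 = 0)
    (hb : ∀ z ∈ ball (0:ℂ) 1, ‖deriv ω z‖ ≤ 1)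
    (hc : ∀ z ∈ ball (0:ℂ) 1, HasSum (fun n : ℕ => c (n + 1) * z ^ (n + 1)) (ω z)) :
    (‖c 1‖ ≤ 2/5 → ‖c 3 - 2 * c 1 * c 2‖ ≤ (1/12) * (1 + ‖c 1‖) * (9 * ‖c 1‖^2 - 4 * ‖c 1‖ + 4)) ∧
    (2/5 ≤ ‖c 1‖ → ‖c 3 - 2 * c 1 * c 2‖ ≤ (4/3) * ‖c 1‖ * (1 - ‖c 1‖^2)) := by
  have h0m : (0:ℂ) ∈ ball (0:ℂ) 1 := mem_ball_self one_pos
  have hco := coeffs ω c hc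
  have hω_an : AnalyticOnNhd ℂ ω (ball 0 1) := hd.analyticOnNhd isOpen_ball
  set f := deriv ω with hf_def
  have hfd : DifferentiableOn ℂ f (ball 0 1) := (hω_an.deriv).differentiableOn
  have hfb : ∀ z ∈ ball (0:ℂ) 1, ‖f z‖ ≤ 1 := by
    intro z hz
    rw [hf_def]
    exact hb z hz
  obtain ⟨b0, b1, hb0, hb1, hE1, hE2⟩ := schur2 f hfd hfb
  have hc1 : f 0 = c 1 := by
    have h := hco 1 le_rfl
    rw [iteratedDeriv_one] at h
    simpa [hf_def] using h
  have hc2 : deriv f 0 = 2 * c 2 := by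
    have h := hco 2 (by norm_num)
    rw [iteratedDeriv_succ, iteratedDeriv_one] at h
    simpa [hf_def, Nat.factorial] using h
  have hc3 : deriv (deriv f) 0 = 6 * c 3 := by
    have h := hco 3 (by norm_num)
    rw [iteratedDeriv_succ, iteratedDeriv_succ, iteratedDeriv_one] at h
    have h6 : ((Nat.factorial 3 : ℕ) : ℂ) = 6 := by norm_num [Nat.factorial]
    rw [h6] at h
    simpa [hf_def] using h
  rw [hc1] at hE1 hE2
  have e1 : 2 * c 2 = (1 - (starRingEnd ℂ) (c 1) * c 1) * b0 := hc2.symm.trans hE1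
  have e2 : 6 * c 3
      = 2 * (1 - (starRingEnd ℂ) (c 1) * c 1) * (b1 - (starRingEnd ℂ) (c 1) * b0^2) :=
    hc3.symm.trans hE2
  have key : c 3 - 2 * c 1 * c 2
      = (1 - (starRingEnd ℂ) (c 1) * c 1) * (b1 - (starRingEnd ℂ) (c 1) * b0^2) / 3
        - c 1 * ((1 - (starRingEnd ℂ) (c 1) * c 1) * b0) := by
    linear_combination (1/6 : ℂ) * e2 - (c 1) * e1
  set t := ‖c 1‖ with ht_def
  have htn : ‖c 1‖ = t := rfl
  have ht0 : 0 ≤ t := norm_nonneg _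
  have ht1 : t ≤ 1 := by
    have h := hb 0 h0m
    rw [hc1] at h
    exact h
  have hKn : ‖(1:ℂ) - (starRingEnd ℂ) (c 1) * (c 1)‖ = 1 - t^2 := by
    have hKc : (1 : ℂ) - (starRingEnd ℂ) (c 1) * (c 1) = ((1 - t^2 : ℝ) : ℂ) := by
      rw [mul_comm, Complex.mul_conj, Complex.normSq_eq_norm_sq]
      push_cast
      ring
    rw [hKc, Complex.norm_real, Real.norm_eq_abs, _root_.abs_of_nonneg (by nlinarith : (0:ℝ) ≤ 1 - t^2)]
  set s := ‖b0‖ with hs_def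
  have hs0 : 0 ≤ s := norm_nonneg _
  have hs1 : s ≤ 1 := hb0
  have hbound : ‖c 3 - 2 * c 1 * c 2‖ ≤ (1-t^2)*((1-s^2) + t*s^2)/3 + t*((1-t^2)*s) := by
    rw [key]
    refine le_trans (norm_sub_le _ _) ?_
    have h1 : ‖(1 - (starRingEnd ℂ) (c 1) * c 1) * (b1 - (starRingEnd ℂ) (c 1) * b0^2) / 3‖
        ≤ (1-t^2)*((1-s^2) + t*s^2)/3 := by
      rw [norm_div, norm_mul, hKn, show ‖(3:ℂ)‖ = 3 by simp]
      have hin : ‖b1 - (starRingEnd ℂ) (c 1) * b0^2‖ ≤ (1-s^2) + t*s^2 := by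
        refine le_trans (norm_sub_le _ _) ?_
        have : ‖(starRingEnd ℂ) (c 1) * b0^2‖ = t * s^2 := by
          rw [norm_mul, RCLike.norm_conj, norm_pow, htn]
        rw [this]
        exact add_le_add hb1 le_rfl
      have hnn : (0:ℝ) ≤ 1 - t^2 := by nlinarith
      gcongr
    have h2 : ‖c 1 * ((1 - (starRingEnd ℂ) (c 1) * c 1) * b0)‖ = t*((1-t^2)*s) := by
      rw [norm_mul, norm_mul, hKn, htn]
    rw [h2]
    exact add_le_add h1 le_rfl
  constructor
  · intro hle
    have hbr := branch1 t s ht0 hle hs0 hs1 ht1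
    calc ‖c 3 - 2 * c 1 * c 2‖ ≤ (1-t^2)*((1-s^2) + t*s^2)/3 + t*((1-t^2)*s) := hbound
      _ = (1 - t^2)*((1 - s^2) + t*s^2)/3 + t*(1-t^2)*s := by ring
      _ ≤ (1/12)*(1+t)*(9*t^2 - 4*t + 4) := hbr
  · intro hge
    have hbr := branch2 t s ht0 hge hs0 hs1 ht1
    calc ‖c 3 - 2 * c 1 * c 2‖ ≤ (1-t^2)*((1-s^2) + t*s^2)/3 + t*((1-t^2)*s) := hbound
      _ = (1 - t^2)*((1 - s^2) + t*s^2)/3 + t*(1-t^2)*s := by ring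
      _ ≤ (4/3)*t*(1-t^2) := hbr
end
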